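/- Let Λ ⊂ ℝⁿ be a full-rank lattice and let ρ(S) = Σ_{y∈S} exp(−π‖y‖²). Then for every t ∈ ℝⁿ, ρ(Λ + t) ≥ ρ(t) · ρ(Λ). -/

import Mathlib

open Real Matrix

/-- The lattice point of `Λ = B·ℤⁿ` corresponding to the integer vector `z`. -/
noncomputable def latPt {n : ℕ} (B : Matrix (Fin n) (Fin n) ℝ) (z : Fin n → ℤ) : Fin n → ℝ :=
  B.mulVec fun i => (z i : ℝ)

lemma sumGaussInt {δ : ℝ} (hδ : 0 < δ) : Summable fun m : ℤ => Real.exp (-δ * (m : ℝ) ^ 2) := by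
  have key : Summable fun k : ℕ => Real.exp (-δ * (k : ℝ) ^ 2) := by
    apply Summable.of_nonneg_of_le (fun k => (Real.exp_pos _).le)
      (f := fun k : ℕ => Real.exp (-δ) ^ k)
    · intro k
      rw [← Real.exp_nat_mul]
      apply Real.exp_le_exp.2
      have : (k : ℝ) ≤ (k : ℝ) ^ 2 := by
        exact_mod_cast Nat.le_self_pow two_ne_zero k
      nlinarith
    · exact summable_geometric_of_lt_one (Real.exp_pos _).le
        (Real.exp_lt_one_iff.2 (by linarith))
  apply Summable.of_nat_of_neg
  · exact key
  · convert key using 2 with k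
    case e'_3 => rfl
    push_cast
    ring

lemma sumGaussPi (n : ℕ) {δ : ℝ} (hδ : 0 < δ) :
    Summable fun z : Fin n → ℤ => Real.exp (-δ * ∑ i, (z i : ℝ) ^ 2) := by
  induction n with
  | zero => exact Summable.of_finite
  | succ n ih =>
    rw [← (Fin.consEquiv (fun _ : Fin (n+1) => ℤ)).summable_iff]
    have : ((fun z : Fin (n+1) → ℤ => Real.exp (-δ * ∑ i, (z i : ℝ) ^ 2)) ∘
        (Fin.consEquiv (fun _ : Fin (n+1) => ℤ))) = fun p : ℤ × (Fin n → ℤ) =>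
          Real.exp (-δ * (p.1 : ℝ) ^ 2) * Real.exp (-δ * ∑ i, (p.2 i : ℝ) ^ 2) := by
      funext p
      simp only [Function.comp_apply, Fin.consEquiv_apply,
        Fin.sum_univ_succ, Fin.cons_zero, Fin.cons_succ, ← Real.exp_add]
      ring_nf
    rw [this]
    exact (sumGaussInt hδ).mul_of_nonneg ih (fun _ => (Real.exp_pos _).le)
      (fun _ => (Real.exp_pos _).le)

lemma normsq_le_sum {n : ℕ} (v : Fin n → ℝ) : ‖v‖ ^ 2 ≤ ∑ i, v i ^ 2 := by
  rcases Nat.eq_zero_or_pos n with h | h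
  · subst h
    simp [norm_eq_zero.2 (Subsingleton.elim v 0)]
  have h1 : ‖v‖ ≤ Real.sqrt (∑ i, v i ^ 2) := by
    apply pi_norm_le_iff_of_nonneg (Real.sqrt_nonneg _) |>.2
    intro i
    rw [Real.norm_eq_abs, ← Real.sqrt_sq_eq_abs]
    apply Real.sqrt_le_sqrt
    exact Finset.single_le_sum (f := fun i => v i ^ 2) (fun i _ => sq_nonneg _)
      (Finset.mem_univ i)
  calc ‖v‖ ^ 2 ≤ Real.sqrt (∑ i, v i ^ 2) ^ 2 := by
        apply pow_le_pow_left₀ (norm_nonneg _) h1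
    _ = ∑ i, v i ^ 2 := Real.sq_sqrt (Finset.sum_nonneg fun i _ => sq_nonneg _)

lemma sum_le_normsq {n : ℕ} (v : Fin n → ℝ) : ∑ i, v i ^ 2 ≤ n * ‖v‖ ^ 2 := by
  calc ∑ i, v i ^ 2 ≤ ∑ _i : Fin n, ‖v‖ ^ 2 := by
        apply Finset.sum_le_sum
        intro i _
        have := norm_le_pi_norm v i
        have h0 : (0:ℝ) ≤ ‖v i‖ := norm_nonneg _
        rw [Real.norm_eq_abs] at this
        nlinarith [abs_nonneg (v i), sq_abs (v i)]
    _ = n * ‖v‖ ^ 2 := by simp [Finset.sum_const, nsmul_eq_mul]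

lemma sumLat {n : ℕ} (B : Matrix (Fin n) (Fin n) ℝ) (hB : IsUnit B.det) (c : Fin n → ℝ) :
    Summable fun z : Fin n → ℤ => Real.exp (-π * ∑ i, (latPt B z i + c i) ^ 2) := by
  rcases Nat.eq_zero_or_pos n with h | hn
  · subst h; exact Summable.of_finite
  -- bound ‖v‖ ≤ M * ‖B.mulVec v‖
  have hInv : ∀ v : Fin n → ℝ, (B⁻¹).mulVec (B.mulVec v) = v := by
    intro v
    rw [Matrix.mulVec_mulVec, Matrix.nonsing_inv_mul B hB, Matrix.one_mulVec]
  set L := LinearMap.toContinuousLinearMap (Matrix.mulVecLin B⁻¹) with hL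
  set M : ℝ := ‖L‖ + 1 with hM
  have hM1 : (1:ℝ) ≤ M := by have := norm_nonneg L; linarith
  have hM0 : (0:ℝ) < M := lt_of_lt_of_le one_pos hM1
  have hbound : ∀ v : Fin n → ℝ, ‖v‖ ≤ M * ‖B.mulVec v‖ := by
    intro v
    have h1 : ‖L (B.mulVec v)‖ ≤ ‖L‖ * ‖B.mulVec v‖ := L.le_opNorm _
    have h2 : L (B.mulVec v) = v := by
      simpa [hL, Matrix.mulVecLin] using hInv v
    rw [h2] at h1
    nlinarith [norm_nonneg (B.mulVec v)]
  set δ : ℝ := π / (2 * n * M ^ 2) with hδdef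
  have hδ : 0 < δ := by
    apply div_pos Real.pi_pos
    positivity
  apply Summable.of_nonneg_of_le (fun z => (Real.exp_pos _).le)
    (f := fun z : Fin n → ℤ =>
      Real.exp (π * ∑ i, c i ^ 2) * Real.exp (-δ * ∑ i, (z i : ℝ) ^ 2))
  · intro z
    rw [← Real.exp_add]
    apply Real.exp_le_exp.2
    set v : Fin n → ℝ := fun i => (z i : ℝ) with hv
    have key : δ * ∑ i, v i ^ 2 ≤ π * ∑ i, (latPt B z i + c i) ^ 2 + π * ∑ i, c i ^ 2 := by
      set a : Fin n → ℝ := B.mulVec v with ha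
      have e1 : ‖a + c‖ ^ 2 ≤ ∑ i, (latPt B z i + c i) ^ 2 := by
        have := normsq_le_sum (a + c)
        simpa [latPt, ha, hv] using this
      have e2 : ‖a‖ - ‖c‖ ≤ ‖a + c‖ := by
        have := norm_sub_norm_le a (-c)
        simp only [norm_neg, sub_neg_eq_add] at this
        linarith
      have e3 : ‖a‖ ^ 2 / 2 - ‖c‖ ^ 2 ≤ ‖a + c‖ ^ 2 := by
        rcases le_or_gt ‖c‖ ‖a‖ with h | h
        · nlinarith [mul_self_le_mul_self (by linarith : (0:ℝ) ≤ ‖a‖ - ‖c‖) e2,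
            sq_nonneg (‖a‖ - 2*‖c‖)]
        · nlinarith [norm_nonneg a, norm_nonneg c, sq_nonneg ‖a + c‖]
      have e4 : ‖v‖ ≤ M * ‖a‖ := hbound v
      have e5 : ‖v‖ ^ 2 ≤ M ^ 2 * ‖a‖ ^ 2 := by
        nlinarith [norm_nonneg v, norm_nonneg a]
      have e6 : ∑ i, v i ^ 2 ≤ n * ‖v‖ ^ 2 := sum_le_normsq v
      have e7 : ‖c‖ ^ 2 ≤ ∑ i, c i ^ 2 := normsq_le_sum c
      have hδ' : δ * (2 * n * M ^ 2) = π := by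
        rw [hδdef]
        field_simp
      have hπ := Real.pi_pos
      have hn' : (1:ℝ) ≤ (n:ℝ) := by exact_mod_cast hn
      have e8 : δ * ∑ i, v i ^ 2 ≤ π * (‖a‖ ^ 2 / 2) := by
        calc δ * ∑ i, v i ^ 2 ≤ δ * (n * (M ^ 2 * ‖a‖ ^ 2)) := by
              apply mul_le_mul_of_nonneg_left _ hδ.le
              have h9 := mul_le_mul_of_nonneg_left e5 (Nat.cast_nonneg (α := ℝ) n)
              linarith
          _ = (δ * (2 * n * M ^ 2)) * (‖a‖ ^ 2 / 2) := by ring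
          _ = π * (‖a‖ ^ 2 / 2) := by rw [hδ']
      have e9 := mul_le_mul_of_nonneg_left
        (show ‖a‖ ^ 2 / 2 ≤ (∑ i, (latPt B z i + c i) ^ 2) + ∑ i, c i ^ 2 by linarith) hπ.le
      linarith [e8, e9]
    linarith [key]
  · exact (sumGaussPi n hδ).mul_left _

lemma amgm (p q : ℝ) : 2 * Real.exp ((p + q) / 2) ≤ Real.exp p + Real.exp q := by
  have h1 : Real.exp p = Real.exp (p/2) * Real.exp (p/2) := by
    rw [← Real.exp_add]; congr 1; ring
  have h2 : Real.exp q = Real.exp (q/2) * Real.exp (q/2) := by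
    rw [← Real.exp_add]; congr 1; ring
  have h3 : Real.exp ((p + q) / 2) = Real.exp (p/2) * Real.exp (q/2) := by
    rw [← Real.exp_add]; congr 1; ring
  rw [h1, h2, h3]
  nlinarith [sq_nonneg (Real.exp (p/2) - Real.exp (q/2))]

theorem stmt4 {n : ℕ} (B : Matrix (Fin n) (Fin n) ℝ) (hB : IsUnit B.det) (t : Fin n → ℝ) :
    Real.exp (-π * ∑ i, t i ^ 2) * ∑' z : Fin n → ℤ, Real.exp (-π * ∑ i, latPt B z i ^ 2) ≤
      ∑' z : Fin n → ℤ, Real.exp (-π * ∑ i, (latPt B z i + t i) ^ 2) := by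
  set f : (Fin n → ℤ) → ℝ := fun z => Real.exp (-π * ∑ i, (latPt B z i + t i) ^ 2) with hfdef
  set f' : (Fin n → ℤ) → ℝ := fun z => Real.exp (-π * ∑ i, (latPt B z i - t i) ^ 2) with hf'def
  set g : (Fin n → ℤ) → ℝ := fun z => Real.exp (-π * ∑ i, latPt B z i ^ 2) with hgdef
  have hf : Summable f := sumLat B hB t
  have hf' : Summable f' := by
    have := sumLat B hB (-t)
    simpa [hf'def, sub_eq_add_neg] using this
  have hg : Summable g := by
    have := sumLat B hB 0
    simpa [hgdef] using this
  have hlatneg : ∀ z : Fin n → ℤ, latPt B (-z) = -latPt B z := by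
    intro z
    unfold latPt
    have h1 : (fun i => ((-z) i : ℝ)) = -(fun i => (z i : ℝ)) := by
      funext i; simp
    rw [h1, Matrix.mulVec_neg]
  have hneg : ∀ z : Fin n → ℤ, f' z = f (-z) := by
    intro z
    simp only [hfdef, hf'def, hlatneg z]
    congr 1
    rw [neg_mul, neg_mul, neg_inj]
    congr 1
    apply Finset.sum_congr rfl
    intro i _
    simp only [Pi.neg_apply]
    ring
  have hff' : ∑' z, f' z = ∑' z, f z := by
    calc ∑' z, f' z = ∑' z, f (-z) := by simp only [hneg]
      _ = ∑' z, f z := (Equiv.neg (Fin n → ℤ)).tsum_eq f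
  have hpoint : ∀ z : Fin n → ℤ, Real.exp (-π * ∑ i, t i ^ 2) * g z ≤ (f z + f' z) / 2 := by
    intro z
    have expand : (∑ i, (latPt B z i + t i) ^ 2) + ∑ i, (latPt B z i - t i) ^ 2
        = 2 * (∑ i, latPt B z i ^ 2) + 2 * ∑ i, t i ^ 2 := by
      rw [← Finset.sum_add_distrib, Finset.mul_sum, Finset.mul_sum,
        ← Finset.sum_add_distrib]
      apply Finset.sum_congr rfl
      intro i _
      ring
    have key := amgm (-π * ∑ i, (latPt B z i + t i) ^ 2)
      (-π * ∑ i, (latPt B z i - t i) ^ 2)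
    have harg : ((-π * ∑ i, (latPt B z i + t i) ^ 2) +
        (-π * ∑ i, (latPt B z i - t i) ^ 2)) / 2
        = (-π * ∑ i, t i ^ 2) + (-π * ∑ i, latPt B z i ^ 2) := by
      rw [show (-π * ∑ i, (latPt B z i + t i) ^ 2) +
            (-π * ∑ i, (latPt B z i - t i) ^ 2)
          = -π * ((∑ i, (latPt B z i + t i) ^ 2) + ∑ i, (latPt B z i - t i) ^ 2) from
        by ring, expand]
      ring
    rw [harg] at key
    have hg' : Real.exp (-π * ∑ i, t i ^ 2) * g z
        = Real.exp ((-π * ∑ i, t i ^ 2) + (-π * ∑ i, latPt B z i ^ 2)) := by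
      rw [Real.exp_add, hgdef]
    rw [hg', hfdef, hf'def]
    linarith [key]
  calc Real.exp (-π * ∑ i, t i ^ 2) * ∑' z, g z
      = ∑' z, Real.exp (-π * ∑ i, t i ^ 2) * g z := (tsum_mul_left).symm
    _ ≤ ∑' z, (f z + f' z) / 2 := by
        apply Summable.tsum_le_tsum hpoint (hg.mul_left _) (((hf.add hf').div_const 2))
    _ = (∑' z, (f z + f' z)) / 2 := by rw [tsum_div_const]
    _ = ((∑' z, f z) + ∑' z, f' z) / 2 := by rw [Summable.tsum_add hf hf']
    _ = ∑' z, f z := by rw [hff']; ring
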